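/- Let a_1,...,a_n be real numbers with sum zero and sum of squares equal to a. Then |∑ a_i^3| ≤ (n-2)/√(n(n-1)) · a^{3/2}. -/

import Mathlib

lemma okumura_one_side (n : ℕ) (hn : 2 ≤ n) (a : Fin n → ℝ) (A : ℝ)
    (hsum : ∑ i, a i = 0) (hsq : ∑ i, (a i) ^ 2 = A) :
    ∑ i, (a i) ^ 3 ≤ (n - 2) / Real.sqrt (n * (n - 1)) * A ^ ((3 : ℝ) / 2) := by
  have hA0 : 0 ≤ A := hsq ▸ Finset.sum_nonneg fun i _ => sq_nonneg _
  have hn1 : (1 : ℝ) ≤ (n : ℝ) := by exact_mod_cast Nat.one_le_of_lt hn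
  have hn2 : (2 : ℝ) ≤ (n : ℝ) := by exact_mod_cast hn
  have hnn1 : (0 : ℝ) < (n : ℝ) * ((n : ℝ) - 1) := by nlinarith
  set r : ℝ := Real.sqrt ((n : ℝ) * ((n : ℝ) - 1)) with hr
  have hr0 : 0 < r := Real.sqrt_pos.2 hnn1
  have hr2 : r ^ 2 = (n : ℝ) * ((n : ℝ) - 1) := Real.sq_sqrt hnn1.le
  set s : ℝ := Real.sqrt A with hs
  have hs0 : 0 ≤ s := Real.sqrt_nonneg _
  have hs2 : s ^ 2 = A := Real.sq_sqrt hA0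
  set d : ℝ := s / r with hd
  set b : ℝ := ((n : ℝ) - 1) * s / r with hb
  have hb0 : 0 ≤ b := by
    have h1 : (0:ℝ) ≤ (n:ℝ) - 1 := by linarith
    positivity
  -- pointwise bound a i ≤ b
  have hbd : ∀ i, a i ≤ b := by
    intro i
    have hcs : (∑ j ∈ Finset.univ.erase i, a j) ^ 2
        ≤ (Finset.univ.erase i).card * ∑ j ∈ Finset.univ.erase i, (a j) ^ 2 :=
      sq_sum_le_card_mul_sum_sq
    have hcard : ((Finset.univ.erase i).card : ℝ) = (n : ℝ) - 1 := by
      rw [Finset.card_erase_of_mem (Finset.mem_univ i)]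
      simp [Nat.cast_sub (Nat.one_le_of_lt hn)]
    have hesum : ∑ j ∈ Finset.univ.erase i, a j = - a i := by
      have h := Finset.add_sum_erase Finset.univ a (Finset.mem_univ i)
      rw [hsum] at h; linarith
    have hesq : ∑ j ∈ Finset.univ.erase i, (a j) ^ 2 = A - (a i) ^ 2 := by
      have h := Finset.add_sum_erase Finset.univ (fun j => (a j) ^ 2) (Finset.mem_univ i)
      simp only [hsq] at h; linarith
    rw [hcard, hesum, hesq] at hcs
    have hb2 : b ^ 2 = ((n : ℝ) - 1) * A / n := by
      rw [hb, div_pow, hr2, mul_pow, hs2]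
      field_simp
    have hsq_le : (a i) ^ 2 ≤ b ^ 2 := by
      rw [hb2, le_div_iff₀ (by linarith : (0:ℝ) < (n:ℝ))]
      nlinarith
    calc a i ≤ |a i| := le_abs_self _
      _ = Real.sqrt ((a i) ^ 2) := (Real.sqrt_sq_eq_abs _).symm
      _ ≤ Real.sqrt (b ^ 2) := Real.sqrt_le_sqrt hsq_le
      _ = b := Real.sqrt_sq hb0
  -- pointwise cubic inequality
  have hsumc : ∑ i, (a i + d) ^ 2 * (a i - b) ≤ 0 :=
    Finset.sum_nonpos fun i _ =>
      mul_nonpos_of_nonneg_of_nonpos (sq_nonneg _) (by linarith [hbd i])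
  have hexp : ∑ i, (a i + d) ^ 2 * (a i - b)
      = (∑ i, (a i) ^ 3) + (2 * d - b) * (∑ i, (a i) ^ 2)
        + (d ^ 2 - 2 * b * d) * (∑ i, a i) - (n : ℝ) * (b * d ^ 2) := by
    rw [Finset.mul_sum, Finset.mul_sum, ← Finset.sum_add_distrib, ← Finset.sum_add_distrib]
    rw [show ((n : ℝ) * (b * d ^ 2)) = ∑ _i : Fin n, b * d ^ 2 by
      simp [Finset.sum_const, mul_comm]]
    rw [← Finset.sum_sub_distrib]
    exact Finset.sum_congr rfl fun i _ => by ring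
  rw [hexp, hsum, hsq, mul_zero, add_zero] at hsumc
  -- now algebra
  have hA32 : A ^ ((3 : ℝ) / 2) = s ^ 3 := by
    rw [hs, show ((3 : ℝ) / 2) = (1 / 2) * 3 by norm_num, Real.rpow_mul hA0,
      ← Real.sqrt_eq_rpow, show (3:ℝ) = ((3:ℕ):ℝ) by norm_num, Real.rpow_natCast]
  rw [hA32]
  have key : ((n : ℝ) - 2) / r * s ^ 3
      = (b - 2 * d) * A + (n : ℝ) * (b * d ^ 2) := by
    rw [hb, hd, ← hs2]
    field_simp
    linear_combination s ^ 3 * hr2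
  rw [key]
  ring_nf
  ring_nf at hsumc
  linarith

theorem okumura_lemma (n : ℕ) (hn : 2 ≤ n) (a : Fin n → ℝ) (A : ℝ)
    (hsum : ∑ i, a i = 0) (hsq : ∑ i, (a i) ^ 2 = A) :
    |∑ i, (a i) ^ 3| ≤ (n - 2) / Real.sqrt (n * (n - 1)) * A ^ ((3 : ℝ) / 2) := by
  rw [abs_le]
  refine ⟨?_, okumura_one_side n hn a A hsum hsq⟩
  have h := okumura_one_side n hn (fun i => -a i) A
    (by rw [← neg_eq_zero, ← Finset.sum_neg_distrib] at hsum; simpa using hsum)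
    (by simpa [neg_pow] using hsq)
  have hneg : ∑ i, (-a i) ^ 3 = -∑ i, (a i) ^ 3 := by
    rw [← Finset.sum_neg_distrib]
    exact Finset.sum_congr rfl fun i _ => by ring
  simp only [hneg] at h
  linarith
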